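/- Symbol-count lower bound: let n ≥ 2 and let M be a natural number such that every trifferent code of length n−1 has cardinality at most M. Then for every trifferent code C ⊆ {0,1,2}^n and every symbol a ∈ {0,1,2}, the number of elements of C whose first coordinate equals a is at least |C| − M. -/

import Mathlib

lemma three_ne_aux (a u v w : Fin 3) : u ≠ a → v ≠ a → w ≠ a → u ≠ v → u ≠ w → v ≠ w → False := by
  revert a u v w; decide

lemma pred_lt_aux {i n : ℕ} (h1 : i < n) (h2 : i ≠ 0) : i - 1 < n - 1 := by omega

def Trifferent {n : ℕ} (C : Finset (Fin n → Fin 3)) : Prop :=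
  ∀ x ∈ C, ∀ y ∈ C, ∀ z ∈ C, x ≠ y → x ≠ z → y ≠ z →
    ∃ i : Fin n, x i ≠ y i ∧ x i ≠ z i ∧ y i ≠ z i

theorem trifferent_symbol_count_lower_bound
    (n : ℕ) (hn : 2 ≤ n) (M : ℕ)
    (hM : ∀ C : Finset (Fin (n - 1) → Fin 3), Trifferent C → C.card ≤ M)
    (C : Finset (Fin n → Fin 3)) (hC : Trifferent C)
    (a : Fin 3) :
    C.card - M ≤ (C.filter fun x => x ⟨0, by omega⟩ = a).card := by
  classical
  have hn1 : 0 < n - 1 := by omega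
  have h0 : 0 < n := by omega
  set i0 : Fin n := ⟨0, h0⟩ with hi0
  set D := C.filter (fun x => ¬ x i0 = a) with hD
  have hsplit : (C.filter fun x => x i0 = a).card + D.card = C.card := by
    rw [hD]
    exact Finset.card_filter_add_card_filter_not _
  have hDsub : D ⊆ C := Finset.filter_subset _ _
  have hDa : ∀ x ∈ D, x i0 ≠ a := fun x hx => (Finset.mem_filter.mp hx).2
  have h3 : ∀ u v w : Fin 3, u ≠ a → v ≠ a → w ≠ a → u ≠ v → u ≠ w → v ≠ w → False :=
    three_ne_aux a
  -- tail map
  let tl : (Fin n → Fin 3) → (Fin (n - 1) → Fin 3) :=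
    fun x j => x ⟨j.val + 1, Nat.add_lt_of_lt_sub j.isLt⟩
  have key : D.card ≤ M := by
    by_cases hcol : ∃ x ∈ D, ∃ y ∈ D, x ≠ y ∧ tl x = tl y
    · obtain ⟨x, hx, y, hy, hxy, htail⟩ := hcol
      have hsub : D ⊆ {x, y} := by
        intro z hz
        by_contra hzmem
        simp only [Finset.mem_insert, Finset.mem_singleton, not_or] at hzmem
        obtain ⟨hzx, hzy⟩ := hzmem
        obtain ⟨i, h1, h2, h3'⟩ := hC x (hDsub hx) y (hDsub hy) z (hDsub hz) hxy
          (fun h => hzx h.symm) (fun h => hzy h.symm)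
        by_cases hi : i.val = 0
        · have : i = i0 := Fin.ext (by simp [hi, hi0])
          subst this
          exact h3 (x i0) (y i0) (z i0) (hDa x hx) (hDa y hy) (hDa z hz) h1 h2 h3'
        · have := congrFun htail ⟨i.val - 1, pred_lt_aux i.isLt hi⟩
          simp only [tl] at this
          have heq : (⟨(⟨i.val - 1, pred_lt_aux i.isLt hi⟩ : Fin (n - 1)).val + 1,
              Nat.add_lt_of_lt_sub (pred_lt_aux i.isLt hi)⟩ : Fin n) = i :=
            Fin.ext (Nat.succ_pred_eq_of_pos (Nat.pos_of_ne_zero hi))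
          rw [heq] at this
          exact h1 this
      have hM2 : 2 ≤ M := by
        set f : Fin (n - 1) → Fin 3 := fun _ => 0 with hf
        set g : Fin (n - 1) → Fin 3 := fun _ => 1 with hg
        have hfg : f ≠ g := by
          intro h
          have := congrFun h ⟨0, hn1⟩
          simp [hf, hg] at this
        have htr : Trifferent ({f, g} : Finset (Fin (n - 1) → Fin 3)) := by
          intro x hx y hy z hz hxy hxz hyz
          simp only [Finset.mem_insert, Finset.mem_singleton] at hx hy hz
          rcases hx with rfl | rfl <;> rcases hy with rfl | rfl <;>
            rcases hz with rfl | rfl <;> simp_all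
        have hcard : ({f, g} : Finset (Fin (n - 1) → Fin 3)).card = 2 := by
          rw [Finset.card_insert_of_notMem (by simpa using hfg), Finset.card_singleton]
        exact le_of_eq_of_le hcard.symm (hM _ htr)
      calc D.card ≤ ({x, y} : Finset _).card := Finset.card_le_card hsub
        _ ≤ 2 := (Finset.card_insert_le _ _).trans (by simp)
        _ ≤ M := hM2
    · push_neg at hcol
      have hinj : Set.InjOn tl ↑D := by
        intro x hx y hy hxy
        by_contra hne
        exact (hcol x hx y hy hne) hxy
      have hcard : (D.image tl).card = D.card := Finset.card_image_of_injOn hinj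
      have htr : Trifferent (D.image tl) := by
        intro t1 ht1 t2 ht2 t3 ht3 h12 h13 h23
        obtain ⟨x, hx, rfl⟩ := Finset.mem_image.mp ht1
        obtain ⟨y, hy, rfl⟩ := Finset.mem_image.mp ht2
        obtain ⟨z, hz, rfl⟩ := Finset.mem_image.mp ht3
        have hxy : x ≠ y := fun h => h12 (by rw [h])
        have hxz : x ≠ z := fun h => h13 (by rw [h])
        have hyz : y ≠ z := fun h => h23 (by rw [h])
        obtain ⟨i, h1, h2, h3'⟩ := hC x (hDsub hx) y (hDsub hy) z (hDsub hz) hxy hxz hyz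
        by_cases hi : i.val = 0
        · have : i = i0 := Fin.ext (by simp [hi, hi0])
          subst this
          exact (h3 (x i0) (y i0) (z i0) (hDa x hx) (hDa y hy) (hDa z hz) h1 h2 h3').elim
        · refine ⟨⟨i.val - 1, pred_lt_aux i.isLt hi⟩, ?_, ?_, ?_⟩ <;>
          · simp only [tl]
            have heq : (⟨(⟨i.val - 1, pred_lt_aux i.isLt hi⟩ : Fin (n - 1)).val + 1,
                Nat.add_lt_of_lt_sub (pred_lt_aux i.isLt hi)⟩ : Fin n) = i :=
              Fin.ext (Nat.succ_pred_eq_of_pos (Nat.pos_of_ne_zero hi))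
            rw [heq]
            assumption
      exact le_of_eq_of_le hcard.symm (hM _ htr)
  rw [← hsplit]
  exact Nat.sub_le_iff_le_add.mpr (Nat.add_le_add_left key _)
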